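/- arXiv:1507.00169 — 3 statements merged into one kernel-verified Lean document; each statement's English description precedes it below -/
import Mathlib

section
/- Let T be an n×n row-stochastic matrix partitioned into L×L blocks T_{st} (block s,t of size n_s × n_t, with Σ n_s = n), such that each block satisfies T_{st} = α_{st} R_{st} for some scalar α_{st} and row-stochastic matrix R_{st}. Let 𝔗 = (α_{st}) be the L×L aggregated matrix. If v is a left eigenvector of T with eigenvalue λ, and the layer-aggregated vector 𝔳 ∈ ℝ^L defined by 𝔳_k = Σ_i v^{(k)}_i (sum of entries of v in block k) is nonzero, then λ is an eigenvalue of 𝔗 with left eigenvector 𝔳. -/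
open Matrix Finset

/-- A (possibly rectangular) matrix is row-stochastic: nonnegative entries,
each row sums to 1. -/
def RowStochastic {ι κ : Type*} [Fintype κ] (M : Matrix ι κ ℝ) : Prop :=
  (∀ i j, 0 ≤ M i j) ∧ ∀ i, ∑ j, M i j = 1

/-- If `T` is a row-stochastic block matrix with `T_{st} = α_{st} R_{st}` for
row-stochastic `R_{st}`, `v` is a left eigenvector of `T` with eigenvalue `lam`,
and the layer-aggregated vector `𝔳` (summing `v` over each layer) is nonzero,
then `lam` is an eigenvalue of the aggregated matrix `α` with left eigenvector `𝔳`. -/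
theorem layer_aggregation_eigenvalue {L : ℕ} {n : Fin L → ℕ}
    (T : Matrix ((s : Fin L) × Fin (n s)) ((s : Fin L) × Fin (n s)) ℝ)
    (hT : RowStochastic T)
    (α : Matrix (Fin L) (Fin L) ℝ)
    (hblock : ∀ s t : Fin L, ∃ R : Matrix (Fin (n s)) (Fin (n t)) ℝ,
      RowStochastic R ∧ ∀ i j, T ⟨s, i⟩ ⟨t, j⟩ = α s t * R i j)
    (lam : ℝ) (v : ((s : Fin L) × Fin (n s)) → ℝ)
    (hv : v ᵥ* T = lam • v)
    (𝔳 : Fin L → ℝ) (h𝔳 : ∀ k, 𝔳 k = ∑ i, v ⟨k, i⟩)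
    (hne : 𝔳 ≠ 0) :
    𝔳 ᵥ* α = lam • 𝔳 ∧ 𝔳 ≠ 0 := by
  refine ⟨?_, hne⟩
  choose R hR hTR using hblock
  funext t
  have h1 : ∑ j, (v ᵥ* T) ⟨t, j⟩ = lam * 𝔳 t := by
    rw [hv]
    simp [h𝔳, Finset.mul_sum]
  have h2 : ∑ j, (v ᵥ* T) ⟨t, j⟩ = ∑ s, 𝔳 s * α s t := by
    simp only [vecMul, dotProduct]
    rw [Finset.sum_comm]
    rw [← Finset.univ_sigma_univ, Finset.sum_sigma]
    refine Finset.sum_congr rfl fun s _ => ?_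
    have : ∀ i : Fin (n s), ∑ j, v ⟨s, i⟩ * T ⟨s, i⟩ ⟨t, j⟩ = v ⟨s, i⟩ * α s t := by
      intro i
      rw [← Finset.mul_sum]
      congr 1
      simp only [hTR]
      rw [← Finset.mul_sum, (hR s t).2 i, mul_one]
    simp only [this]
    rw [← Finset.sum_mul, h𝔳]
  have := h1 ▸ h2
  simp only [Pi.smul_apply, smul_eq_mul, vecMul, dotProduct]
  rw [← this]
end

section
/- Let T be a 2n×2n row-stochastic matrix of block form T = [[β T(A_1), (1−β) T^I_{12}], [(1−β) T^I_{21}, β T(A_2)]], where β is a constant, T^I = [[0, T^I_{12}],[T^I_{21}, 0]] is a row-stochastic matrix (the transition matrix of the bipartite inter-layer network), and the diagonal blocks β T(A_1), β T(A_2) have uniform columns. If λ is an eigenvalue of T^I with λ ≠ 1 and λ ≠ −1, then (1−β)λ is an eigenvalue of T, with the same eigenvector. -/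
open Matrix Finset

/-- Two-layer supra-transition matrix `T = [[β T(A₁), (1−β) Tᴵ₁₂],[(1−β) Tᴵ₂₁, β T(A₂)]]`:
if `lam ≠ ±1` is an eigenvalue of the bipartite inter-layer transition matrix `Tᴵ`,
then `(1−β)·lam` is an eigenvalue of `T`, with the same (left) eigenvector. -/
theorem interlayer_eigenvalue_scaling {n : ℕ} (β : ℝ)
    (T TI : Matrix (Fin n ⊕ Fin n) (Fin n ⊕ Fin n) ℝ)
    (TA1 TA2 : Matrix (Fin n) (Fin n) ℝ)
    (hTA1 : RowStochastic TA1) (hTA2 : RowStochastic TA2)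
    (hT : RowStochastic T) (hTI : RowStochastic TI)
    (hTIll : ∀ i j, TI (Sum.inl i) (Sum.inl j) = 0)
    (hTIrr : ∀ i j, TI (Sum.inr i) (Sum.inr j) = 0)
    (hTll : ∀ i j, T (Sum.inl i) (Sum.inl j) = β * TA1 i j)
    (hTlr : ∀ i j, T (Sum.inl i) (Sum.inr j) = (1 - β) * TI (Sum.inl i) (Sum.inr j))
    (hTrl : ∀ i j, T (Sum.inr i) (Sum.inl j) = (1 - β) * TI (Sum.inr i) (Sum.inl j))
    (hTrr : ∀ i j, T (Sum.inr i) (Sum.inr j) = β * TA2 i j)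
    (huniform1 : ∀ (j i i' : Fin n), β * TA1 i j = β * TA1 i' j)
    (huniform2 : ∀ (j i i' : Fin n), β * TA2 i j = β * TA2 i' j)
    (lam : ℝ) (hlam1 : lam ≠ 1) (hlam2 : lam ≠ -1)
    (v : Fin n ⊕ Fin n → ℝ) (hvne : v ≠ 0)
    (hv : v ᵥ* TI = lam • v) :
    v ᵥ* T = ((1 - β) * lam) • v := by
  by_cases hn : n = 0
  · subst hn
    exact absurd (funext fun x => by cases x with
      | inl i => exact i.elim0
      | inr i => exact i.elim0) hvne
  have hn' : 0 < n := Nat.pos_of_ne_zero hn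
  set i0 : Fin n := ⟨0, hn'⟩ with hi0
  set S1 := ∑ i, v (Sum.inl i) with hS1def
  set S2 := ∑ i, v (Sum.inr i) with hS2def
  have key : ∀ k, (∑ i, v (Sum.inl i) * TI (Sum.inl i) k)
      + (∑ i, v (Sum.inr i) * TI (Sum.inr i) k) = lam * v k := by
    intro k
    have h := congrFun hv k
    simp only [vecMul, dotProduct, Pi.smul_apply, smul_eq_mul,
      Fintype.sum_sum_type] at h
    exact h
  -- row sums of the off-diagonal blocks of TI are 1
  have hrow1 : ∀ i : Fin n, ∑ j, TI (Sum.inl i) (Sum.inr j) = 1 := by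
    intro i
    have h := hTI.2 (Sum.inl i)
    rw [Fintype.sum_sum_type] at h
    simpa [hTIll] using h
  have hrow2 : ∀ i : Fin n, ∑ j, TI (Sum.inr i) (Sum.inl j) = 1 := by
    intro i
    have h := hTI.2 (Sum.inr i)
    rw [Fintype.sum_sum_type] at h
    simpa [hTIrr] using h
  have h12 : S1 = lam * S2 := by
    have h := Finset.sum_congr rfl (fun j (_ : j ∈ Finset.univ) => key (Sum.inr j))
    rw [Finset.sum_add_distrib] at h
    simp only [hTIrr, mul_zero, Finset.sum_const_zero, add_zero] at h
    rw [Finset.sum_comm] at h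
    have h2 : ∀ x : Fin n, ∑ y, v (Sum.inl x) * TI (Sum.inl x) (Sum.inr y) = v (Sum.inl x) := by
      intro x; rw [← Finset.mul_sum, hrow1, mul_one]
    rw [Finset.sum_congr rfl (fun x _ => h2 x), ← Finset.mul_sum] at h
    exact h
  have h21 : S2 = lam * S1 := by
    have h := Finset.sum_congr rfl (fun j (_ : j ∈ Finset.univ) => key (Sum.inl j))
    rw [Finset.sum_add_distrib] at h
    simp only [hTIll, mul_zero, Finset.sum_const_zero, zero_add] at h
    rw [Finset.sum_comm] at h
    have h2 : ∀ x : Fin n, ∑ y, v (Sum.inr x) * TI (Sum.inr x) (Sum.inl y) = v (Sum.inr x) := by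
      intro x; rw [← Finset.mul_sum, hrow2, mul_one]
    rw [Finset.sum_congr rfl (fun x _ => h2 x), ← Finset.mul_sum] at h
    exact h
  have hS1 : S1 = 0 := by
    have h : (1 - lam * lam) * S1 = 0 := by
      have := h12
      rw [h21] at this
      nlinarith [this]
    have hne : (1 - lam * lam) ≠ 0 := by
      intro hc
      have : (lam - 1) * (lam + 1) = 0 := by nlinarith
      rcases mul_eq_zero.mp this with h' | h'
      · exact hlam1 (by linarith)
      · exact hlam2 (by linarith)
    exact (mul_eq_zero.mp h).resolve_left hne
  have hS2 : S2 = 0 := by rw [h21, hS1, mul_zero]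
  funext k
  cases k with
  | inl j =>
    have hdiag : ∑ i, v (Sum.inl i) * T (Sum.inl i) (Sum.inl j) = 0 := by
      calc ∑ i, v (Sum.inl i) * T (Sum.inl i) (Sum.inl j)
          = ∑ i, v (Sum.inl i) * (β * TA1 i0 j) := by
            refine Finset.sum_congr rfl fun i _ => ?_
            rw [hTll, huniform1 j i i0]
        _ = S1 * (β * TA1 i0 j) := by rw [← Finset.sum_mul]
        _ = 0 := by rw [hS1, zero_mul]
    have hoff : ∑ i, v (Sum.inr i) * TI (Sum.inr i) (Sum.inl j) = lam * v (Sum.inl j) := by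
      have h := key (Sum.inl j)
      simpa [hTIll] using h
    simp only [vecMul, dotProduct, Pi.smul_apply, smul_eq_mul, Fintype.sum_sum_type]
    rw [hdiag, zero_add]
    calc ∑ i, v (Sum.inr i) * T (Sum.inr i) (Sum.inl j)
        = (1 - β) * ∑ i, v (Sum.inr i) * TI (Sum.inr i) (Sum.inl j) := by
          rw [Finset.mul_sum]
          refine Finset.sum_congr rfl fun i _ => ?_
          rw [hTrl]; ring
      _ = (1 - β) * lam * v (Sum.inl j) := by rw [hoff]; ring
  | inr j =>
    have hdiag : ∑ i, v (Sum.inr i) * T (Sum.inr i) (Sum.inr j) = 0 := by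
      calc ∑ i, v (Sum.inr i) * T (Sum.inr i) (Sum.inr j)
          = ∑ i, v (Sum.inr i) * (β * TA2 i0 j) := by
            refine Finset.sum_congr rfl fun i _ => ?_
            rw [hTrr, huniform2 j i i0]
        _ = S2 * (β * TA2 i0 j) := by rw [← Finset.sum_mul]
        _ = 0 := by rw [hS2, zero_mul]
    have hoff : ∑ i, v (Sum.inl i) * TI (Sum.inl i) (Sum.inr j) = lam * v (Sum.inr j) := by
      have h := key (Sum.inr j)
      simpa [hTIrr] using h
    simp only [vecMul, dotProduct, Pi.smul_apply, smul_eq_mul, Fintype.sum_sum_type]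
    rw [hdiag, add_zero]
    calc ∑ i, v (Sum.inl i) * T (Sum.inl i) (Sum.inr j)
        = (1 - β) * ∑ i, v (Sum.inl i) * TI (Sum.inl i) (Sum.inr j) := by
          rw [Finset.mul_sum]
          refine Finset.sum_congr rfl fun i _ => ?_
          rw [hTlr]; ring
      _ = (1 - β) * lam * v (Sum.inr j) := by rw [hoff]; ring
end

section
/- Let T̂ be the mean-field supra-transition matrix of a two-layer network with known intra-layer topology: T̂ = [[(1−α₁₂) T(A₁), T̂₁₂], [T̂₂₁, (1−α₂₁) T(A₂)]], where T̂₁₂ is the n₁×n₂ matrix with all entries m/(n₂(n₁ d̂₁ + m)), T̂₂₁ is the n₂×n₁ matrix with all entries m/(n₁(n₂ d̂₂ + m)), α₁₂ = m/(n₁ d̂₁ + m), α₂₁ = m/(n₂ d̂₂ + m), and T(A_i) are row-stochastic. Then every eigenvalue of (1−α₁₂)T(A₁) other than its largest eigenvalue 1−α₁₂, and every eigenvalue of (1−α₂₁)T(A₂) other than its largest eigenvalue 1−α₂₁, is an eigenvalue of T̂. -/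
open Matrix Finset

/-- If `u` is a left eigenvector of the complexification of a real matrix whose row sums
are all `s`, for an eigenvalue `lam ≠ s`, then the entries of `u` sum to zero. -/
lemma sum_left_eig_zero {n : ℕ} (M : Matrix (Fin n) (Fin n) ℝ) (s : ℝ)
    (hrow : ∀ i, ∑ j, M i j = s) (lam : ℂ) (hlam : lam ≠ (s : ℂ))
    (u : Fin n → ℂ) (hu : u ᵥ* M.map Complex.ofReal = lam • u) :
    ∑ i, u i = 0 := by
  have h1 : ∑ j, (u ᵥ* M.map Complex.ofReal) j = ∑ j, (lam • u) j := by rw [hu]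
  have h2 : ∑ j, (u ᵥ* M.map Complex.ofReal) j = (s : ℂ) * ∑ i, u i := by
    simp only [Matrix.vecMul, dotProduct, Matrix.map_apply]
    rw [Finset.sum_comm]
    rw [Finset.mul_sum]
    refine Finset.sum_congr rfl fun i _ => ?_
    rw [← Finset.mul_sum, ← Complex.ofReal_sum]
    simp only [hrow i]
    ring
  have h3 : ∑ j, (lam • u) j = lam * ∑ i, u i := by
    simp [Finset.mul_sum]
  have : ((s : ℂ) - lam) * ∑ i, u i = 0 := by
    rw [sub_mul, ← h2, h1, h3, sub_self]
  rcases mul_eq_zero.1 this with h | h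
  · exact absurd (by linear_combination -h) hlam
  · exact h

/-- Mean-field two-layer supra-transition matrix with known intra-layer topology:
every eigenvalue of `(1−α₁₂)T(A₁)` other than its largest eigenvalue `1−α₁₂`, and every
eigenvalue of `(1−α₂₁)T(A₂)` other than its largest eigenvalue `1−α₂₁`, is an eigenvalue
of the mean-field matrix `T̂`. -/
theorem mean_field_block_eigenvalues {n1 n2 : ℕ}
    (d1 d2 m : ℝ) (hden1 : 0 < n1 * d1 + m) (hden2 : 0 < n2 * d2 + m)
    (α12 α21 : ℝ)
    (hα12 : α12 = m / (n1 * d1 + m)) (hα21 : α21 = m / (n2 * d2 + m))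
    (TA1 : Matrix (Fin n1) (Fin n1) ℝ) (TA2 : Matrix (Fin n2) (Fin n2) ℝ)
    (hTA1 : RowStochastic TA1) (hTA2 : RowStochastic TA2)
    (Th : Matrix (Fin n1 ⊕ Fin n2) (Fin n1 ⊕ Fin n2) ℝ)
    (hll : ∀ i j, Th (Sum.inl i) (Sum.inl j) = (1 - α12) * TA1 i j)
    (hlr : ∀ i j, Th (Sum.inl i) (Sum.inr j) = m / (n2 * (n1 * d1 + m)))
    (hrl : ∀ i j, Th (Sum.inr i) (Sum.inl j) = m / (n1 * (n2 * d2 + m)))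
    (hrr : ∀ i j, Th (Sum.inr i) (Sum.inr j) = (1 - α21) * TA2 i j) :
    (∀ lam : ℂ, lam ≠ ((1 - α12 : ℝ) : ℂ) →
      (∃ u : Fin n1 → ℂ, u ≠ 0 ∧
        u ᵥ* (((1 - α12) • TA1).map (Complex.ofReal)) = lam • u) →
      ∃ v : Fin n1 ⊕ Fin n2 → ℂ, v ≠ 0 ∧
        v ᵥ* (Th.map (Complex.ofReal)) = lam • v)
    ∧ (∀ lam : ℂ, lam ≠ ((1 - α21 : ℝ) : ℂ) →
      (∃ u : Fin n2 → ℂ, u ≠ 0 ∧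
        u ᵥ* (((1 - α21) • TA2).map (Complex.ofReal)) = lam • u) →
      ∃ v : Fin n1 ⊕ Fin n2 → ℂ, v ≠ 0 ∧
        v ᵥ* (Th.map (Complex.ofReal)) = lam • v) := by
  constructor
  · rintro lam hlam ⟨u, hu0, hu⟩
    have hsum : ∑ i, u i = 0 := by
      refine sum_left_eig_zero ((1 - α12) • TA1) (1 - α12) (fun i => ?_) lam hlam u hu
      simp [Matrix.smul_apply, ← Finset.mul_sum, hTA1.2 i]
    refine ⟨Sum.elim u 0, fun h => hu0 (funext fun i => congrFun h (Sum.inl i)), ?_⟩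
    funext j
    have hj := congrFun hu
    cases j with
    | inl j =>
      have := hj j
      simp only [Matrix.vecMul, dotProduct, Matrix.map_apply,
        Fintype.sum_sum_type, Sum.elim_inl, Sum.elim_inr, Pi.zero_apply, zero_mul,
        Finset.sum_const_zero, add_zero, hll, Matrix.smul_apply, smul_eq_mul,
        Pi.smul_apply] at this ⊢
      exact this
    | inr j =>
      simp only [Matrix.vecMul, dotProduct, Matrix.map_apply,
        Fintype.sum_sum_type, Sum.elim_inl, Sum.elim_inr, Pi.zero_apply, zero_mul,
        Finset.sum_const_zero, add_zero, hlr, Pi.smul_apply, smul_eq_mul, mul_zero]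
      rw [← Finset.sum_mul, hsum, zero_mul]
  · rintro lam hlam ⟨u, hu0, hu⟩
    have hsum : ∑ i, u i = 0 := by
      refine sum_left_eig_zero ((1 - α21) • TA2) (1 - α21) (fun i => ?_) lam hlam u hu
      simp [Matrix.smul_apply, ← Finset.mul_sum, hTA2.2 i]
    refine ⟨Sum.elim 0 u, fun h => hu0 (funext fun i => congrFun h (Sum.inr i)), ?_⟩
    funext j
    have hj := congrFun hu
    cases j with
    | inl j =>
      simp only [Matrix.vecMul, dotProduct, Matrix.map_apply,
        Fintype.sum_sum_type, Sum.elim_inl, Sum.elim_inr, Pi.zero_apply, zero_mul,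
        Finset.sum_const_zero, zero_add, hrl, Pi.smul_apply, smul_eq_mul, mul_zero]
      rw [← Finset.sum_mul, hsum, zero_mul]
    | inr j =>
      have := hj j
      simp only [Matrix.vecMul, dotProduct, Matrix.map_apply,
        Fintype.sum_sum_type, Sum.elim_inl, Sum.elim_inr, Pi.zero_apply, zero_mul,
        Finset.sum_const_zero, zero_add, hrr, Matrix.smul_apply, smul_eq_mul,
        Pi.smul_apply] at this ⊢
      exact this
end
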